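/- (Matrix S-lemma.) Let n_a, n_b ≥ 1, and let M̃ and Ñ be symmetric matrices in ℝ^{(n_a+n_b)×(n_a+n_b)}. Assume the generalized Slater condition: there exists Z̄ ∈ ℝ^{n_b×n_a} such that [I_{n_a}; Z̄]⊤ Ñ [I_{n_a}; Z̄] ≻ 0. Then the following are equivalent: (1) for every Z ∈ ℝ^{n_b×n_a} with [I_{n_a}; Z]⊤ Ñ [I_{n_a}; Z] ⪰ 0 one has [I_{n_a}; Z]⊤ M̃ [I_{n_a}; Z] ⪰ 0; (2) there exists a scalar α ≥ 0 such that M̃ − α Ñ ⪰ 0. -/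

import Mathlib

open Matrix

namespace Stmt15Aux

variable {ι : Type*} [Fintype ι]

def qf (A : Matrix ι ι ℝ) (w : ι → ℝ) : ℝ := w ⬝ᵥ A *ᵥ w

lemma symm_dot {A : Matrix ι ι ℝ} (hA : Aᵀ = A) (u v : ι → ℝ) :
    u ⬝ᵥ A *ᵥ v = v ⬝ᵥ A *ᵥ u := by
  rw [← hA, mulVec_transpose, dotProduct_comm, ← dotProduct_mulVec, hA]

lemma qf_expand (A : Matrix ι ι ℝ) (a : ℝ) (u v : ι → ℝ) :
    qf A (a • u + v) = a^2 * qf A u + a * (u ⬝ᵥ A *ᵥ v + v ⬝ᵥ A *ᵥ u) + qf A v := by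
  simp only [qf, mulVec_add, mulVec_smul, dotProduct_add, add_dotProduct,
    dotProduct_smul, smul_dotProduct, smul_eq_mul]
  ring

lemma qf_smul (A : Matrix ι ι ℝ) (a : ℝ) (u : ι → ℝ) : qf A (a • u) = a^2 * qf A u := by
  simp only [qf, mulVec_smul, dotProduct_smul, smul_dotProduct, smul_eq_mul]; ring

lemma qf_conj {ι' : Type*} [Fintype ι'] (A : Matrix ι' ι' ℝ) (L : Matrix ι' ι ℝ) (ξ : ι → ℝ) :
    ξ ⬝ᵥ (Lᵀ * A * L) *ᵥ ξ = qf A (L *ᵥ ξ) := by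
  rw [← mulVec_mulVec, ← mulVec_mulVec, dotProduct_mulVec, vecMul_transpose, qf]

omit [Fintype ι] in
lemma herm_transpose {A : Matrix ι ι ℝ} (hA : A.IsHermitian) : Aᵀ = A := by
  ext i j; rw [transpose_apply, ← hA.apply i j, star_trivial]

omit [Fintype ι] in
lemma herm_iff {A : Matrix ι ι ℝ} : A.IsHermitian ↔ Aᵀ = A := by
  constructor
  · exact herm_transpose
  · intro h
    ext i j
    rw [conjTranspose_apply, star_trivial]
    exact congrFun (congrFun h i) j

omit [Fintype ι] in
lemma conj_transpose_symm {ι' : Type*} {A : Matrix ι' ι' ℝ} (hA : Aᵀ = A)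
    (L : Matrix ι' ι ℝ) [Fintype ι'] :
    (Lᵀ * A * L)ᵀ = Lᵀ * A * L := by
  rw [transpose_mul, transpose_mul, transpose_transpose, hA]
  exact (Matrix.mul_assoc Lᵀ A L).symm

lemma posSemidef_iff (A : Matrix ι ι ℝ) : A.PosSemidef ↔ Aᵀ = A ∧ ∀ x, 0 ≤ x ⬝ᵥ A *ᵥ x := by
  constructor
  · intro h; exact ⟨herm_transpose h.1, fun x => by simpa using h.dotProduct_mulVec_nonneg x⟩
  · rintro ⟨h1, h2⟩; exact PosSemidef.of_dotProduct_mulVec_nonneg (herm_iff.2 h1) fun x => by simpa using h2 x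

lemma cs_ineq {A : Matrix ι ι ℝ} (hA : Aᵀ = A) (hpsd : ∀ v, 0 ≤ qf A v) (x c : ι → ℝ) :
    (x ⬝ᵥ A *ᵥ c)^2 ≤ qf A x * qf A c := by
  set β := x ⬝ᵥ A *ᵥ c with hβ
  set γ := qf A x
  set C := qf A c
  have key : ∀ s t : ℝ, 0 ≤ s^2 * γ + 2*s*t*β + t^2 * C := by
    intro s t
    have h := hpsd (s • x + t • c)
    rw [qf_expand, qf_smul] at h
    have hsym : x ⬝ᵥ A *ᵥ (t • c) + (t • c) ⬝ᵥ A *ᵥ x = 2 * t * β := by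
      rw [symm_dot hA (t • c) x]
      simp only [mulVec_smul, dotProduct_smul, smul_eq_mul, hβ]; ring
    rw [hsym] at h
    nlinarith [h]
  have hγ : 0 ≤ γ := hpsd x
  have hC : 0 ≤ C := hpsd c
  rcases eq_or_lt_of_le hC with hC0 | hC0
  · have hβ0 : β = 0 := by
      by_contra hne
      have h := key 1 (-(γ + 1)/(2*β))
      rw [← hC0] at h
      have h2 : (-(γ + 1)/(2*β)) * β = -(γ+1)/2 := by
        field_simp
      nlinarith [h, h2]
    rw [hβ0, ← hC0]; nlinarith
  · have h := key C (-β)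
    nlinarith [h, hC0]

lemma small_poly_nonneg {a b c δ : ℝ} (hδ : 0 < δ)
    (h : ∀ ε : ℝ, 0 < ε → ε < δ → 0 ≤ a + b*ε + c*ε^2) : 0 ≤ a := by
  by_contra ha
  push_neg at ha
  set K := |b| + |c| + 1 with hK
  have hKpos : 0 < K := by positivity
  set ε := min (δ/2) (min 1 (-a/(2*K))) with hε
  have hεpos : 0 < ε := lt_min (by linarith) (lt_min one_pos (div_pos (by linarith) (by linarith)))
  have hεδ : ε < δ := lt_of_le_of_lt (min_le_left _ _) (by linarith)
  have hε1 : ε ≤ 1 := le_trans (min_le_right _ _) (min_le_left _ _)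
  have hεa : ε ≤ -a/(2*K) := le_trans (min_le_right _ _) (min_le_right _ _)
  have h2 := h ε hεpos hεδ
  have hb : b*ε ≤ (abs b) * ε := mul_le_mul_of_nonneg_right (le_abs_self b) hεpos.le
  have hc : c*ε^2 ≤ (abs c) * ε := by
    have h1 : c*ε^2 ≤ (abs c)*ε^2 := mul_le_mul_of_nonneg_right (le_abs_self c) (sq_nonneg ε)
    have h3 : (abs c)*ε^2 ≤ (abs c)*ε := by
      have h6 : ε^2 ≤ ε := by nlinarith
      exact mul_le_mul_of_nonneg_left h6 (abs_nonneg c)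
    linarith
  have hKε : K * ε ≤ -a/2 := by
    have h1 : K * ε ≤ K * (-a/(2*K)) := mul_le_mul_of_nonneg_left hεa hKpos.le
    have h4 : K * (-a/(2*K)) = -a/2 := by
      field_simp
    linarith
  have h5 : ((abs b) + (abs c))*ε ≤ K*ε := by
    have : (abs b) + (abs c) ≤ K := by rw [hK]; linarith
    exact mul_le_mul_of_nonneg_right this hεpos.le
  nlinarith


lemma qf_comb (A : Matrix ι ι ℝ) (s r : ℝ) (u v : ι → ℝ) :
    qf A (s • u + r • v) = s^2 * qf A u + s * r * (u ⬝ᵥ A *ᵥ v + v ⬝ᵥ A *ᵥ u) + r^2 * qf A v := by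
  simp only [qf, mulVec_add, mulVec_smul, dotProduct_add, add_dotProduct,
    dotProduct_smul, smul_dotProduct, smul_eq_mul]
  ring

lemma qf_neg (A : Matrix ι ι ℝ) (u : ι → ℝ) : qf A (-u) = qf A u := by
  have : -u = (-1 : ℝ) • u := by funext i; simp
  rw [this, qf_smul]; norm_num

lemma dines_scalar (a₁ b₁ a₂ b₂ cA cB a b : ℝ) (ha : 0 ≤ a) (hb : 0 ≤ b) (hab : a + b = 1)
    (hd : a₁ * b₂ - a₂ * b₁ ≠ 0)
    (hτ : 0 ≤ ((b₂ - b₁) * cA + (a₁ - a₂) * cB) / (a₁ * b₂ - a₂ * b₁)) :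
    ∃ s₀ P : ℝ, 0 < P ∧
      (1-s₀)^2 * a₁ + (1-s₀)*s₀*cA + s₀^2 * a₂ = (a * a₁ + b * a₂) * P ∧
      (1-s₀)^2 * b₁ + (1-s₀)*s₀*cB + s₀^2 * b₂ = (a * b₁ + b * b₂) * P := by
  obtain ⟨d, hdd, hd0⟩ : ∃ d : ℝ, d = a₁ * b₂ - a₂ * b₁ ∧ d ≠ 0 := ⟨_, rfl, hd⟩
  obtain ⟨σ, hσd, hσ0⟩ : ∃ σ : ℝ, σ * d = (b₂ - b₁) * cA + (a₁ - a₂) * cB ∧ 0 ≤ σ := by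
    refine ⟨((b₂ - b₁) * cA + (a₁ - a₂) * cB) / d, div_mul_cancel₀ _ hd0, ?_⟩
    rw [hdd]; exact hτ
  have hPpos : ∀ s ∈ Set.Icc (0:ℝ) 1, 0 < (1-s)^2 + (1-s)*s*σ + s^2 := by
    rintro s ⟨hs0, hs1⟩
    nlinarith [mul_nonneg (mul_nonneg (by linarith : (0:ℝ) ≤ 1 - s) hs0) hσ0,
      sq_nonneg (1 - 2*s)]
  have hcont : ContinuousOn (fun s : ℝ =>
      (b₂ * ((1-s)^2 * a₁ + (1-s)*s*cA + s^2 * a₂)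
        - a₂ * ((1-s)^2 * b₁ + (1-s)*s*cB + s^2 * b₂)) / d
      / ((1-s)^2 + (1-s)*s*σ + s^2)) (Set.Icc 0 1) := by
    apply ContinuousOn.div
    · fun_prop
    · fun_prop
    · intro s hs; exact (hPpos s hs).ne'
  have hsub := intermediate_value_Icc' (by norm_num : (0:ℝ) ≤ 1) hcont
  have hnum0 : b₂ * ((1-(0:ℝ))^2 * a₁ + (1-(0:ℝ))*0*cA + (0:ℝ)^2 * a₂)
      - a₂ * ((1-(0:ℝ))^2 * b₁ + (1-(0:ℝ))*0*cB + (0:ℝ)^2 * b₂) = d := by rw [hdd]; ring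
  have hr0 : (b₂ * ((1-(0:ℝ))^2 * a₁ + (1-(0:ℝ))*0*cA + (0:ℝ)^2 * a₂)
      - a₂ * ((1-(0:ℝ))^2 * b₁ + (1-(0:ℝ))*0*cB + (0:ℝ)^2 * b₂)) / d
      / ((1-(0:ℝ))^2 + (1-(0:ℝ))*0*σ + (0:ℝ)^2) = 1 := by
    rw [hnum0, div_self hd0]
    norm_num
  have hr1 : (b₂ * ((1-(1:ℝ))^2 * a₁ + (1-(1:ℝ))*1*cA + (1:ℝ)^2 * a₂)
      - a₂ * ((1-(1:ℝ))^2 * b₁ + (1-(1:ℝ))*1*cB + (1:ℝ)^2 * b₂)) / d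
      / ((1-(1:ℝ))^2 + (1-(1:ℝ))*1*σ + (1:ℝ)^2) = 0 := by
    rw [show b₂ * ((1-(1:ℝ))^2 * a₁ + (1-(1:ℝ))*1*cA + (1:ℝ)^2 * a₂)
      - a₂ * ((1-(1:ℝ))^2 * b₁ + (1-(1:ℝ))*1*cB + (1:ℝ)^2 * b₂) = 0 from by ring]
    simp
  have hmem : a ∈ Set.Icc ((fun s : ℝ =>
      (b₂ * ((1-s)^2 * a₁ + (1-s)*s*cA + s^2 * a₂)
        - a₂ * ((1-s)^2 * b₁ + (1-s)*s*cB + s^2 * b₂)) / d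
      / ((1-s)^2 + (1-s)*s*σ + s^2)) 1) ((fun s : ℝ =>
      (b₂ * ((1-s)^2 * a₁ + (1-s)*s*cA + s^2 * a₂)
        - a₂ * ((1-s)^2 * b₁ + (1-s)*s*cB + s^2 * b₂)) / d
      / ((1-s)^2 + (1-s)*s*σ + s^2)) 0) := by
    simp only
    rw [hr0, hr1]
    exact ⟨ha, by linarith⟩
  obtain ⟨s₀, hs₀, hrs₀⟩ := hsub hmem
  simp only at hrs₀
  have hPs := hPpos s₀ hs₀
  refine ⟨s₀, (1-s₀)^2 + (1-s₀)*s₀*σ + s₀^2, hPs, ?_, ?_⟩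
  · -- from hrs₀
    have h1 : b₂ * ((1-s₀)^2 * a₁ + (1-s₀)*s₀*cA + s₀^2 * a₂)
        - a₂ * ((1-s₀)^2 * b₁ + (1-s₀)*s₀*cB + s₀^2 * b₂)
        = a * (((1-s₀)^2 + (1-s₀)*s₀*σ + s₀^2) * d) := by
      rw [div_div, div_eq_iff (mul_ne_zero hd0 hPs.ne')] at hrs₀
      linarith [hrs₀]
    have hPlin : (b₂ - b₁) * ((1-s₀)^2 * a₁ + (1-s₀)*s₀*cA + s₀^2 * a₂)
        + (a₁ - a₂) * ((1-s₀)^2 * b₁ + (1-s₀)*s₀*cB + s₀^2 * b₂)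
        = ((1-s₀)^2 + (1-s₀)*s₀*σ + s₀^2) * d := by
      linear_combination (-((1-s₀)^2 + s₀^2)) * hdd - ((1-s₀)*s₀) * hσd
    have h2 : a₁ * ((1-s₀)^2 * b₁ + (1-s₀)*s₀*cB + s₀^2 * b₂)
        - b₁ * ((1-s₀)^2 * a₁ + (1-s₀)*s₀*cA + s₀^2 * a₂)
        = b * (((1-s₀)^2 + (1-s₀)*s₀*σ + s₀^2) * d) := by
      linear_combination hPlin - h1 - (((1-s₀)^2 + (1-s₀)*s₀*σ + s₀^2) * d) * hab
    have h3 : ((1-s₀)^2 * a₁ + (1-s₀)*s₀*cA + s₀^2 * a₂) * d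
        = ((a * a₁ + b * a₂) * ((1-s₀)^2 + (1-s₀)*s₀*σ + s₀^2)) * d := by
      linear_combination a₁ * h1 + a₂ * h2
        + ((1-s₀)^2 * a₁ + (1-s₀)*s₀*cA + s₀^2 * a₂) * hdd
    exact mul_right_cancel₀ hd0 h3
  · have h1 : b₂ * ((1-s₀)^2 * a₁ + (1-s₀)*s₀*cA + s₀^2 * a₂)
        - a₂ * ((1-s₀)^2 * b₁ + (1-s₀)*s₀*cB + s₀^2 * b₂)
        = a * (((1-s₀)^2 + (1-s₀)*s₀*σ + s₀^2) * d) := by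
      rw [div_div, div_eq_iff (mul_ne_zero hd0 hPs.ne')] at hrs₀
      linarith [hrs₀]
    have hPlin : (b₂ - b₁) * ((1-s₀)^2 * a₁ + (1-s₀)*s₀*cA + s₀^2 * a₂)
        + (a₁ - a₂) * ((1-s₀)^2 * b₁ + (1-s₀)*s₀*cB + s₀^2 * b₂)
        = ((1-s₀)^2 + (1-s₀)*s₀*σ + s₀^2) * d := by
      linear_combination (-((1-s₀)^2 + s₀^2)) * hdd - ((1-s₀)*s₀) * hσd
    have h2 : a₁ * ((1-s₀)^2 * b₁ + (1-s₀)*s₀*cB + s₀^2 * b₂)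
        - b₁ * ((1-s₀)^2 * a₁ + (1-s₀)*s₀*cA + s₀^2 * a₂)
        = b * (((1-s₀)^2 + (1-s₀)*s₀*σ + s₀^2) * d) := by
      linear_combination hPlin - h1 - (((1-s₀)^2 + (1-s₀)*s₀*σ + s₀^2) * d) * hab
    have h3 : ((1-s₀)^2 * b₁ + (1-s₀)*s₀*cB + s₀^2 * b₂) * d
        = ((a * b₁ + b * b₂) * ((1-s₀)^2 + (1-s₀)*s₀*σ + s₀^2)) * d := by
      linear_combination b₁ * h1 + b₂ * h2
        + ((1-s₀)^2 * b₁ + (1-s₀)*s₀*cB + s₀^2 * b₂) * hdd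
    exact mul_right_cancel₀ hd0 h3

lemma dines_main (A B : Matrix ι ι ℝ) (w₁ w₂ : ι → ℝ) (a b : ℝ)
    (ha : 0 ≤ a) (hb : 0 ≤ b) (hab : a + b = 1)
    (hd : qf A w₁ * qf B w₂ - qf A w₂ * qf B w₁ ≠ 0)
    (hτ : 0 ≤ ((qf B w₂ - qf B w₁) * (w₁ ⬝ᵥ A *ᵥ w₂ + w₂ ⬝ᵥ A *ᵥ w₁)
        + (qf A w₁ - qf A w₂) * (w₁ ⬝ᵥ B *ᵥ w₂ + w₂ ⬝ᵥ B *ᵥ w₁))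
        / (qf A w₁ * qf B w₂ - qf A w₂ * qf B w₁)) :
    ∃ w : ι → ℝ, a * qf A w₁ + b * qf A w₂ = qf A w ∧ a * qf B w₁ + b * qf B w₂ = qf B w := by
  obtain ⟨s₀, P, hP, h1, h2⟩ := dines_scalar (qf A w₁) (qf B w₁) (qf A w₂) (qf B w₂)
    (w₁ ⬝ᵥ A *ᵥ w₂ + w₂ ⬝ᵥ A *ᵥ w₁) (w₁ ⬝ᵥ B *ᵥ w₂ + w₂ ⬝ᵥ B *ᵥ w₁) a b ha hb hab hd hτ
  refine ⟨(Real.sqrt P)⁻¹ • ((1-s₀) • w₁ + s₀ • w₂), ?_, ?_⟩ <;>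
    rw [qf_smul, ← Real.sqrt_inv, Real.sq_sqrt (by positivity), qf_comb]
  · rw [h1]
    field_simp
  · rw [h2]
    field_simp

lemma dines (A B : Matrix ι ι ℝ) :
    Convex ℝ {p : ℝ × ℝ | ∃ w : ι → ℝ, p = (qf A w, qf B w)} := by
  rintro p₁ ⟨w₁, rfl⟩ p₂ ⟨w₂, rfl⟩ a b ha hb hab
  simp only [Set.mem_setOf_eq, Prod.smul_mk, smul_eq_mul, Prod.mk_add_mk, Prod.mk.injEq]
  by_cases hd : qf A w₁ * qf B w₂ - qf A w₂ * qf B w₁ = 0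
  · by_cases h1 : qf A w₁ = 0 ∧ qf B w₁ = 0
    · refine ⟨Real.sqrt b • w₂, ?_, ?_⟩
      · rw [qf_smul, Real.sq_sqrt hb, h1.1]; ring
      · rw [qf_smul, Real.sq_sqrt hb, h1.2]; ring
    · have hc : ∃ c : ℝ, qf A w₂ = c * qf A w₁ ∧ qf B w₂ = c * qf B w₁ := by
        by_cases ha0 : qf A w₁ = 0
        · have hb0 : qf B w₁ ≠ 0 := by tauto
          have ha₂0 : qf A w₂ = 0 := by
            have h2 : qf A w₂ * qf B w₁ = 0 := by rw [ha0] at hd; linarith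
            rcases mul_eq_zero.1 h2 with h | h
            · exact h
            · exact absurd h hb0
          exact ⟨qf B w₂/qf B w₁, by rw [ha₂0, ha0]; ring, by field_simp⟩
        · refine ⟨qf A w₂/qf A w₁, by field_simp, ?_⟩
          field_simp
          linarith [hd]
      obtain ⟨c, hca, hcb⟩ := hc
      by_cases hκ : 0 ≤ a + b * c
      · refine ⟨Real.sqrt (a + b*c) • w₁, ?_, ?_⟩
        · rw [qf_smul, Real.sq_sqrt hκ, hca]; ring
        · rw [qf_smul, Real.sq_sqrt hκ, hcb]; ring
      · push_neg at hκ
        have hc0 : c < 0 := by nlinarith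
        have hbpos : 0 < b := by nlinarith
        have hdiv : 0 ≤ (a + b*c)/c := by
          rw [div_nonneg_iff]; right; exact ⟨hκ.le, hc0.le⟩
        refine ⟨Real.sqrt ((a + b*c)/c) • w₂, ?_, ?_⟩
        · rw [qf_smul, Real.sq_sqrt hdiv, hca]
          field_simp [hc0.ne]
        · rw [qf_smul, Real.sq_sqrt hdiv, hcb]
          field_simp [hc0.ne]
  · by_cases hτ : 0 ≤ ((qf B w₂ - qf B w₁) * (w₁ ⬝ᵥ A *ᵥ w₂ + w₂ ⬝ᵥ A *ᵥ w₁)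
        + (qf A w₁ - qf A w₂) * (w₁ ⬝ᵥ B *ᵥ w₂ + w₂ ⬝ᵥ B *ᵥ w₁))
        / (qf A w₁ * qf B w₂ - qf A w₂ * qf B w₁)
    · exact dines_main A B w₁ w₂ a b ha hb hab hd hτ
    · push_neg at hτ
      have hA2 : qf A (-w₂) = qf A w₂ := qf_neg A w₂
      have hB2 : qf B (-w₂) = qf B w₂ := qf_neg B w₂
      have hcA' : w₁ ⬝ᵥ A *ᵥ (-w₂) + (-w₂) ⬝ᵥ A *ᵥ w₁
          = -(w₁ ⬝ᵥ A *ᵥ w₂ + w₂ ⬝ᵥ A *ᵥ w₁) := by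
        rw [mulVec_neg, dotProduct_neg, neg_dotProduct]; ring
      have hcB' : w₁ ⬝ᵥ B *ᵥ (-w₂) + (-w₂) ⬝ᵥ B *ᵥ w₁
          = -(w₁ ⬝ᵥ B *ᵥ w₂ + w₂ ⬝ᵥ B *ᵥ w₁) := by
        rw [mulVec_neg, dotProduct_neg, neg_dotProduct]; ring
      have hd' : qf A w₁ * qf B (-w₂) - qf A (-w₂) * qf B w₁ ≠ 0 := by
        rw [hA2, hB2]; exact hd
      have hτ' : 0 ≤ ((qf B (-w₂) - qf B w₁) * (w₁ ⬝ᵥ A *ᵥ (-w₂) + (-w₂) ⬝ᵥ A *ᵥ w₁)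
          + (qf A w₁ - qf A (-w₂)) * (w₁ ⬝ᵥ B *ᵥ (-w₂) + (-w₂) ⬝ᵥ B *ᵥ w₁))
          / (qf A w₁ * qf B (-w₂) - qf A (-w₂) * qf B w₁) := by
        rw [hA2, hB2, hcA', hcB']
        rw [show (qf B w₂ - qf B w₁) * -(w₁ ⬝ᵥ A *ᵥ w₂ + w₂ ⬝ᵥ A *ᵥ w₁)
            + (qf A w₁ - qf A w₂) * -(w₁ ⬝ᵥ B *ᵥ w₂ + w₂ ⬝ᵥ B *ᵥ w₁)
            = -((qf B w₂ - qf B w₁) * (w₁ ⬝ᵥ A *ᵥ w₂ + w₂ ⬝ᵥ A *ᵥ w₁)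
            + (qf A w₁ - qf A w₂) * (w₁ ⬝ᵥ B *ᵥ w₂ + w₂ ⬝ᵥ B *ᵥ w₁)) by ring]
        rw [neg_div]
        linarith [hτ]
      obtain ⟨w, h1, h2⟩ := dines_main A B w₁ (-w₂) a b ha hb hab hd' hτ'
      rw [hA2] at h1
      rw [hB2] at h2
      exact ⟨w, h1, h2⟩

lemma slemma (A B : Matrix ι ι ℝ)
    (hpt : ∀ w : ι → ℝ, 0 ≤ qf B w → 0 ≤ qf A w)
    (w₀ : ι → ℝ) (hw₀ : 0 < qf B w₀) :
    ∃ α : ℝ, 0 ≤ α ∧ ∀ w : ι → ℝ, 0 ≤ qf A w - α * qf B w := by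
  set D := {p : ℝ × ℝ | ∃ w : ι → ℝ, p = (qf A w, qf B w)} with hD
  have hDc : Convex ℝ D := dines A B
  set s : Set (ℝ × ℝ) := {p : ℝ × ℝ | p.1 < 0} ∩ {p : ℝ × ℝ | 0 < p.2} with hs
  have hsc : Convex ℝ s := by
    apply Convex.inter
    · exact convex_halfSpace_lt (LinearMap.isLinear (LinearMap.fst ℝ ℝ ℝ)) 0
    · exact convex_halfSpace_gt (LinearMap.isLinear (LinearMap.snd ℝ ℝ ℝ)) 0
  have hso : IsOpen s := by
    apply IsOpen.inter
    · exact isOpen_lt continuous_fst continuous_const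
    · exact isOpen_lt continuous_const continuous_snd
  have hdisj : Disjoint s D := by
    rw [Set.disjoint_left]
    rintro p ⟨hp1, hp2⟩ ⟨w, rfl⟩
    simp only [Set.mem_setOf_eq] at hp1 hp2
    exact absurd (hpt w hp2.le) (not_le.2 hp1)
  obtain ⟨f, u, hfs, hfD⟩ := geometric_hahn_banach_open hsc hso hDc hdisj
  have h0D : ((0 : ℝ), (0 : ℝ)) ∈ D := ⟨0, by simp [qf]⟩
  have hu0 : u ≤ 0 := by
    have := hfD _ h0D
    have hzero : f ((0 : ℝ), (0 : ℝ)) = 0 := by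
      have : ((0:ℝ), (0:ℝ)) = (0 : ℝ × ℝ) := rfl
      rw [this, map_zero]
    linarith [this, hzero]
  set f₁ := f (1, 0) with hf₁def
  set f₂ := f (0, 1) with hf₂def
  have hf : ∀ p : ℝ × ℝ, f p = p.1 * f₁ + p.2 * f₂ := by
    intro p
    have hp : p = p.1 • ((1:ℝ), (0:ℝ)) + p.2 • ((0:ℝ), (1:ℝ)) := by
      ext <;> simp
    rw [hp, map_add, f.map_smul, f.map_smul]
    simp [smul_eq_mul]
    rfl
  have hf₁ : 0 ≤ f₁ := by
    by_contra hcon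
    push_neg at hcon
    set T := max 1 ((u - f₂ + 1)/(-f₁)) with hT
    have hT1 : (1:ℝ) ≤ T := le_max_left _ _
    have hT2 : (u - f₂ + 1)/(-f₁) ≤ T := le_max_right _ _
    have hmem : ((-T : ℝ), (1:ℝ)) ∈ s := ⟨by simp only [Set.mem_setOf_eq]; linarith, by
      simp only [Set.mem_setOf_eq]; norm_num⟩
    have hlt := hfs _ hmem
    rw [hf] at hlt
    simp only at hlt
    have : u - f₂ + 1 ≤ T * (-f₁) := by
      rw [div_le_iff₀ (by linarith : (0:ℝ) < -f₁)] at hT2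
      linarith
    nlinarith
  have hf₂ : f₂ ≤ 0 := by
    by_contra hcon
    push_neg at hcon
    set T := max 1 ((u + f₁ + 1)/f₂) with hT
    have hT1 : (1:ℝ) ≤ T := le_max_left _ _
    have hT2 : (u + f₁ + 1)/f₂ ≤ T := le_max_right _ _
    have hmem : ((-1 : ℝ), T) ∈ s := ⟨by norm_num, by simp only [Set.mem_setOf_eq]; linarith⟩
    have hlt := hfs _ hmem
    rw [hf] at hlt
    simp only at hlt
    have : u + f₁ + 1 ≤ T * f₂ := by
      rw [div_le_iff₀ hcon] at hT2
      linarith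
    nlinarith
  have hfne : ¬(f₁ = 0 ∧ f₂ = 0) := by
    rintro ⟨h1, h2⟩
    have hmem : ((-1 : ℝ), (1 : ℝ)) ∈ s := ⟨by norm_num, by norm_num⟩
    have hlt := hfs _ hmem
    rw [hf, h1, h2] at hlt
    simp at hlt
    have := hfD _ h0D
    rw [hf] at this
    simp [h1, h2] at this
    linarith
  have key : ∀ w : ι → ℝ, 0 ≤ f₁ * qf A w + f₂ * qf B w := by
    intro w
    by_contra hcon
    push_neg at hcon
    set X := f₁ * qf A w + f₂ * qf B w with hX
    set t := Real.sqrt ((u - 1)/X) with ht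
    have hXneg : X < 0 := hcon
    have hdiv : 0 ≤ (u - 1)/X := by
      rw [div_nonneg_iff]; right; constructor <;> linarith
    have ht2 : t^2 = (u - 1)/X := Real.sq_sqrt hdiv
    have hmemD : ((t^2 * qf A w, t^2 * qf B w) : ℝ × ℝ) ∈ D := by
      refine ⟨t • w, ?_⟩
      rw [qf_smul, qf_smul]
    have := hfD _ hmemD
    rw [hf] at this
    simp only at this
    have heq : t^2 * qf A w * f₁ + t^2 * qf B w * f₂ = t^2 * X := by rw [hX]; ring
    rw [heq, ht2] at this
    have : u ≤ u - 1 := by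
      rw [div_mul_cancel₀ _ hXneg.ne] at this
      exact this
    linarith
  rcases eq_or_lt_of_le hf₁ with h1 | h1
  · exfalso
    have hf₂neg : f₂ < 0 := by
      rcases eq_or_lt_of_le hf₂ with h2 | h2
      · exact absurd ⟨h1.symm, h2⟩ hfne
      · exact h2
    have := key w₀
    rw [← h1] at this
    nlinarith
  · refine ⟨-f₂/f₁, div_nonneg (by linarith) h1.le, ?_⟩
    intro w
    have := key w
    have h2 : -f₂/f₁ * qf B w = (-f₂ * qf B w)/f₁ := by ring
    rw [h2, sub_nonneg, div_le_iff₀ h1]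
    nlinarith

lemma vecMulVec_mulVec' (y : ι → ℝ) {ι2 : Type*} [Fintype ι2] (g ξ : ι2 → ℝ) :
    vecMulVec y g *ᵥ ξ = (g ⬝ᵥ ξ) • y := by
  funext i
  simp only [mulVec, vecMulVec_apply, dotProduct, Pi.smul_apply, smul_eq_mul, Finset.sum_mul]
  exact Finset.sum_congr rfl fun j _ => by ring

section Main

variable {na nb : ℕ}

lemma L_mulVec (Z : Matrix (Fin nb) (Fin na) ℝ) (ξ : Fin na → ℝ) :
    Matrix.fromRows (1 : Matrix (Fin na) (Fin na) ℝ) Z *ᵥ ξ = Sum.elim ξ (Z *ᵥ ξ) := by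
  rw [fromRows_mulVec, one_mulVec]

lemma stepA (M N : Matrix (Fin na ⊕ Fin nb) (Fin na ⊕ Fin nb) ℝ)
    (hMt : Mᵀ = M) (hNt : Nᵀ = N) (Zbar : Matrix (Fin nb) (Fin na) ℝ)
    (hG : (((Matrix.fromRows (1 : Matrix (Fin na) (Fin na) ℝ) Zbar)ᵀ * N * Matrix.fromRows 1 Zbar : Matrix (Fin na) (Fin na) ℝ)).PosDef)
    (H : ∀ Z : Matrix (Fin nb) (Fin na) ℝ,
        (((Matrix.fromRows (1 : Matrix (Fin na) (Fin na) ℝ) Z)ᵀ * N * Matrix.fromRows 1 Z : Matrix (Fin na) (Fin na) ℝ)).PosSemidef →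
        (((Matrix.fromRows (1 : Matrix (Fin na) (Fin na) ℝ) Z)ᵀ * M * Matrix.fromRows 1 Z : Matrix (Fin na) (Fin na) ℝ)).PosSemidef)
    (w : Fin na ⊕ Fin nb → ℝ) (hx : w ∘ Sum.inl ≠ 0) (hq : 0 < qf N w) :
    0 ≤ qf M w := by
  set x : Fin na → ℝ := w ∘ Sum.inl with hxdef
  set y : Fin nb → ℝ := w ∘ Sum.inr with hydef
  have hwsum : Sum.elim x y = w := by funext i; cases i <;> rfl
  set G : Matrix (Fin na) (Fin na) ℝ := (Matrix.fromRows (1 : Matrix (Fin na) (Fin na) ℝ) Zbar)ᵀ * N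
      * Matrix.fromRows 1 Zbar with hGdef
  have hGt : Gᵀ = G := conj_transpose_symm hNt _
  have hGq : ∀ c : Fin na → ℝ, c ⬝ᵥ G *ᵥ c = qf N (Matrix.fromRows 1 Zbar *ᵥ c) :=
    fun c => qf_conj N _ c
  have hGpsd : ∀ v : Fin na → ℝ, 0 ≤ qf G v := by
    intro v
    have := hG.posSemidef.dotProduct_mulVec_nonneg v
    simpa [qf] using this
  have hγ : 0 < qf G x := by
    have := hG.dotProduct_mulVec_pos hx
    simpa [qf] using this
  set γ := qf G x with hγdef
  set g : Fin na → ℝ := (Matrix.fromRows (1 : Matrix (Fin na) (Fin na) ℝ) Zbar)ᵀ *ᵥ (N *ᵥ w)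
    with hgdef
  have hg : ∀ c : Fin na → ℝ, g ⬝ᵥ c = (Matrix.fromRows 1 Zbar *ᵥ c) ⬝ᵥ (N *ᵥ w) := by
    intro c
    rw [hgdef, mulVec_transpose, ← dotProduct_mulVec, dotProduct_comm]
  have hsqq : Real.sqrt (qf N w / γ)^2 = qf N w / γ := Real.sq_sqrt (by positivity)
  have hsqpos : 0 < Real.sqrt (qf N w / γ) := Real.sqrt_pos.2 (by positivity)
  set t : ℝ := (if 0 ≤ g ⬝ᵥ x then 1 else -1) * Real.sqrt (qf N w / γ) with htdef
  have ht2 : t^2 = qf N w / γ := by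
    rw [htdef, mul_pow, hsqq]
    split_ifs <;> norm_num
  set gH : Fin na → ℝ := g + t • (G *ᵥ x) with hgHdef
  set δ := gH ⬝ᵥ x with hδdef
  have hδval : δ = g ⬝ᵥ x + t * γ := by
    rw [hδdef, hgHdef, add_dotProduct, smul_dotProduct, smul_eq_mul,
      dotProduct_comm (G *ᵥ x) x]
    rfl
  have hδ : δ ≠ 0 := by
    rw [hδval, htdef]
    split_ifs with hsign
    · have : 0 < 1 * Real.sqrt (qf N w / γ) * γ := by positivity
      nlinarith
    · push_neg at hsign
      have : 0 < Real.sqrt (qf N w / γ) * γ := by positivity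
      nlinarith
  set Z := Zbar + δ⁻¹ • vecMulVec (y - Zbar *ᵥ x) gH with hZdef
  have hZv : ∀ ξ : Fin na → ℝ, Z *ᵥ ξ = Zbar *ᵥ ξ + (δ⁻¹ * (gH ⬝ᵥ ξ)) • (y - Zbar *ᵥ x) := by
    intro ξ
    rw [hZdef, add_mulVec, smul_mulVec, vecMulVec_mulVec']
    rw [smul_smul]
  have hZx : Z *ᵥ x = y := by
    rw [hZv x, ← hδdef, inv_mul_cancel₀ hδ, one_smul]
    abel
  have hdecomp : ∀ ξ : Fin na → ℝ,
      Matrix.fromRows (1 : Matrix (Fin na) (Fin na) ℝ) Z *ᵥ ξ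
      = (δ⁻¹ * (gH ⬝ᵥ ξ)) • w
        + Matrix.fromRows (1 : Matrix (Fin na) (Fin na) ℝ) Zbar *ᵥ (ξ - (δ⁻¹ * (gH ⬝ᵥ ξ)) • x) := by
    intro ξ
    rw [L_mulVec, L_mulVec, hZv ξ]
    funext i
    cases i with
    | inl j =>
      have hwj : w (Sum.inl j) = x j := rfl
      simp only [Sum.elim_inl, Pi.add_apply, Pi.smul_apply, Pi.sub_apply, smul_eq_mul, hwj]
      ring
    | inr j =>
      have hwj : w (Sum.inr j) = y j := rfl
      simp only [Sum.elim_inr, Pi.add_apply, Pi.smul_apply, Pi.sub_apply, smul_eq_mul, hwj,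
        mulVec_sub, mulVec_smul]
      ring
  have hFN : (((Matrix.fromRows (1 : Matrix (Fin na) (Fin na) ℝ) Z)ᵀ * N
      * Matrix.fromRows 1 Z : Matrix (Fin na) (Fin na) ℝ)).PosSemidef := by
    rw [posSemidef_iff]
    refine ⟨conj_transpose_symm hNt _, fun ξ => ?_⟩
    erw [qf_conj, hdecomp ξ]
    set α := δ⁻¹ * (gH ⬝ᵥ ξ) with hα
    set c := ξ - α • x with hc
    rw [qf_expand]
    have hgHc : gH ⬝ᵥ c = 0 := by
      rw [hc, dotProduct_sub, dotProduct_smul, smul_eq_mul, ← hδdef, hα]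
      field_simp
      ring
    have hcross : w ⬝ᵥ N *ᵥ (Matrix.fromRows 1 Zbar *ᵥ c)
        + (Matrix.fromRows 1 Zbar *ᵥ c) ⬝ᵥ N *ᵥ w = 2 * (g ⬝ᵥ c) := by
      rw [symm_dot hNt w (Matrix.fromRows 1 Zbar *ᵥ c), ← hg c]
      ring
    have hqv : qf N (Matrix.fromRows 1 Zbar *ᵥ c) = qf G c := (hGq c).symm
    rw [hcross, hqv]
    have hgc : g ⬝ᵥ c = -(t * ((G *ᵥ x) ⬝ᵥ c)) := by
      have h2 : gH ⬝ᵥ c = g ⬝ᵥ c + t * ((G *ᵥ x) ⬝ᵥ c) := by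
        rw [hgHdef, add_dotProduct, smul_dotProduct, smul_eq_mul]
      rw [h2] at hgHc
      linarith
    have hβ : (G *ᵥ x) ⬝ᵥ c = x ⬝ᵥ G *ᵥ c := by
      rw [dotProduct_comm, symm_dot hGt c x]
    have hCS : (x ⬝ᵥ G *ᵥ c)^2 ≤ γ * qf G c := cs_ineq hGt hGpsd x c
    have hqt : qf N w = t^2 * γ := by
      rw [ht2]
      field_simp
    rw [hgc, hβ, hqt]
    nlinarith [sq_nonneg (α * t * γ - x ⬝ᵥ G *ᵥ c), hγ, hCS, hGpsd c,
      mul_pos hγ hγ]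
  have hFM := H Z hFN
  have hLZx : Matrix.fromRows (1 : Matrix (Fin na) (Fin na) ℝ) Z *ᵥ x = w := by
    rw [L_mulVec, hZx, hwsum]
  have := hFM.dotProduct_mulVec_nonneg x
  rw [star_trivial] at this
  erw [qf_conj, hLZx] at this
  exact this



end Main

lemma pos_small (q cr c2 : ℝ) (hq : 0 < q) :
    ∃ δ : ℝ, 0 < δ ∧ ∀ ε : ℝ, 0 < ε → ε < δ → 0 < q + cr * ε + c2 * ε^2 := by
  have hK : 0 < abs cr + abs c2 + 1 := by positivity
  refine ⟨min 1 (q / (2 * (abs cr + abs c2 + 1))), lt_min one_pos (by positivity), ?_⟩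
  intro ε hε hεlt
  have hε1 : ε ≤ 1 := le_of_lt (lt_of_lt_of_le hεlt (min_le_left _ _))
  have hε2 : ε < q / (2 * (abs cr + abs c2 + 1)) := lt_of_lt_of_le hεlt (min_le_right _ _)
  rw [lt_div_iff₀ (by positivity)] at hε2
  have h1 : -(abs cr * ε) ≤ cr * ε := by nlinarith [neg_abs_le cr]
  have h2 : -(abs c2 * ε) ≤ c2 * ε^2 := by
    nlinarith [mul_le_mul_of_nonneg_right (neg_abs_le c2) (sq_nonneg ε),
      mul_nonneg (mul_nonneg (abs_nonneg c2) hε.le) (sub_nonneg.2 hε1)]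
  nlinarith [abs_nonneg cr, abs_nonneg c2]

lemma qf_sub_smul {ι : Type*} [Fintype ι] (M N : Matrix ι ι ℝ) (α : ℝ) (v : ι → ℝ) :
    qf (M - α • N) v = qf M v - α * qf N v := by
  simp only [qf, sub_mulVec, smul_mulVec, dotProduct_sub, dotProduct_smul, smul_eq_mul]

section MainSteps

variable {na nb : ℕ}

lemma stepB (ha : 0 < na) (M N : Matrix (Fin na ⊕ Fin nb) (Fin na ⊕ Fin nb) ℝ)
    (hMt : Mᵀ = M) (hNt : Nᵀ = N) (Zbar : Matrix (Fin nb) (Fin na) ℝ)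
    (hG : (((Matrix.fromRows (1 : Matrix (Fin na) (Fin na) ℝ) Zbar)ᵀ * N * Matrix.fromRows 1 Zbar : Matrix (Fin na) (Fin na) ℝ)).PosDef)
    (H : ∀ Z : Matrix (Fin nb) (Fin na) ℝ,
        (((Matrix.fromRows (1 : Matrix (Fin na) (Fin na) ℝ) Z)ᵀ * N * Matrix.fromRows 1 Z : Matrix (Fin na) (Fin na) ℝ)).PosSemidef →
        (((Matrix.fromRows (1 : Matrix (Fin na) (Fin na) ℝ) Z)ᵀ * M * Matrix.fromRows 1 Z : Matrix (Fin na) (Fin na) ℝ)).PosSemidef)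
    (w : Fin na ⊕ Fin nb → ℝ) (hq : 0 < qf N w) :
    0 ≤ qf M w := by
  rcases eq_or_ne (w ∘ Sum.inl) 0 with hx0 | hx
  · -- x = 0 : perturb in the x direction
    set u : Fin na ⊕ Fin nb → ℝ := Sum.elim ((Pi.single (⟨0, ha⟩ : Fin na) (1:ℝ) : Fin na → ℝ)) 0 with hu
    obtain ⟨δ, hδpos, hδ⟩ := pos_small (qf N w) (u ⬝ᵥ N *ᵥ w + w ⬝ᵥ N *ᵥ u) (qf N u) hq
    refine small_poly_nonneg (b := u ⬝ᵥ M *ᵥ w + w ⬝ᵥ M *ᵥ u) (c := qf M u) hδpos ?_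
    intro ε hε1 hε2
    have hqN : 0 < qf N (w + ε • u) := by
      rw [add_comm, qf_expand]
      have := hδ ε hε1 hε2
      nlinarith [this]
    have hxne : (w + ε • u) ∘ Sum.inl ≠ 0 := by
      intro hcon
      have h2 := congrFun hcon (⟨0, ha⟩ : Fin na)
      have h3 : w (Sum.inl ⟨0, ha⟩) = 0 := by
        have := congrFun hx0 (⟨0, ha⟩ : Fin na)
        exact this
      simp only [Function.comp_apply, Pi.add_apply, Pi.smul_apply, smul_eq_mul, hu,
        Sum.elim_inl, Pi.single_eq_same, Pi.zero_apply, h3, mul_one, zero_add] at h2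
      exact hε1.ne' h2
    have hres := stepA M N hMt hNt Zbar hG H (w + ε • u) hxne hqN
    rw [add_comm, qf_expand] at hres
    nlinarith [hres]
  · exact stepA M N hMt hNt Zbar hG H w hx hq

lemma stepC (ha : 0 < na) (M N : Matrix (Fin na ⊕ Fin nb) (Fin na ⊕ Fin nb) ℝ)
    (hMt : Mᵀ = M) (hNt : Nᵀ = N) (Zbar : Matrix (Fin nb) (Fin na) ℝ)
    (hG : (((Matrix.fromRows (1 : Matrix (Fin na) (Fin na) ℝ) Zbar)ᵀ * N * Matrix.fromRows 1 Zbar : Matrix (Fin na) (Fin na) ℝ)).PosDef)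
    (H : ∀ Z : Matrix (Fin nb) (Fin na) ℝ,
        (((Matrix.fromRows (1 : Matrix (Fin na) (Fin na) ℝ) Z)ᵀ * N * Matrix.fromRows 1 Z : Matrix (Fin na) (Fin na) ℝ)).PosSemidef →
        (((Matrix.fromRows (1 : Matrix (Fin na) (Fin na) ℝ) Z)ᵀ * M * Matrix.fromRows 1 Z : Matrix (Fin na) (Fin na) ℝ)).PosSemidef)
    (w : Fin na ⊕ Fin nb → ℝ) (hq : 0 ≤ qf N w) :
    0 ≤ qf M w := by
  have he : ((Pi.single (⟨0, ha⟩ : Fin na) (1:ℝ) : Fin na → ℝ)) ≠ 0 := by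
    intro hcon
    have := congrFun hcon (⟨0, ha⟩ : Fin na)
    simp [Pi.single_eq_same] at this
  have hqu : 0 < qf N (Matrix.fromRows 1 Zbar *ᵥ (Pi.single (⟨0, ha⟩ : Fin na) (1:ℝ) : Fin na → ℝ)) := by
    have h2 := hG.dotProduct_mulVec_pos he
    rw [star_trivial] at h2
    erw [qf_conj] at h2
    exact h2
  obtain ⟨u, hqu', hcr⟩ : ∃ u : Fin na ⊕ Fin nb → ℝ,
      qf N u = qf N (Matrix.fromRows 1 Zbar *ᵥ (Pi.single (⟨0, ha⟩ : Fin na) (1:ℝ) : Fin na → ℝ))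
      ∧ 0 ≤ u ⬝ᵥ N *ᵥ w + w ⬝ᵥ N *ᵥ u := by
    rcases le_or_gt 0 ((Matrix.fromRows 1 Zbar *ᵥ (Pi.single (⟨0, ha⟩ : Fin na) (1:ℝ) : Fin na → ℝ)) ⬝ᵥ N *ᵥ w
        + w ⬝ᵥ N *ᵥ (Matrix.fromRows 1 Zbar *ᵥ (Pi.single (⟨0, ha⟩ : Fin na) (1:ℝ) : Fin na → ℝ))) with h | h
    · exact ⟨_, rfl, by linarith⟩
    · refine ⟨-(Matrix.fromRows 1 Zbar *ᵥ (Pi.single (⟨0, ha⟩ : Fin na) (1:ℝ) : Fin na → ℝ)), qf_neg N _, ?_⟩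
      rw [mulVec_neg, dotProduct_neg, neg_dotProduct]
      linarith
  refine small_poly_nonneg (b := u ⬝ᵥ M *ᵥ w + w ⬝ᵥ M *ᵥ u) (c := qf M u)
    one_pos ?_
  intro ε hε1 hε2
  have hqN : 0 < qf N (w + ε • u) := by
    rw [add_comm, qf_expand]
    have h5 : 0 < ε^2 * qf N u := by
      rw [hqu']
      positivity
    nlinarith [mul_nonneg hε1.le hcr]
  have hres := stepB ha M N hMt hNt Zbar hG H (w + ε • u) hqN
  rw [add_comm, qf_expand] at hres
  nlinarith [hres]

end MainSteps

end Stmt15Aux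

open Stmt15Aux

/-- Matrix S-lemma: Let `M̃, Ñ` be symmetric matrices of size `n_a + n_b` and
suppose the generalized Slater condition holds: `[I; Z̄]ᵀ Ñ [I; Z̄] ≻ 0` for some `Z̄`.
Then `[I; Z]ᵀ M̃ [I; Z] ⪰ 0` for all `Z` with `[I; Z]ᵀ Ñ [I; Z] ⪰ 0` if and only if there
exists `α ≥ 0` with `M̃ − αÑ ⪰ 0`. -/
theorem stmt15 (na nb : ℕ) (ha : 0 < na) (hb : 0 < nb)
    (M N : Matrix (Fin na ⊕ Fin nb) (Fin na ⊕ Fin nb) ℝ)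
    (hM : M.IsHermitian) (hN : N.IsHermitian)
    (Zbar : Matrix (Fin nb) (Fin na) ℝ)
    (hslater : ((Matrix.fromRows (1 : Matrix (Fin na) (Fin na) ℝ) Zbar)ᵀ * N * Matrix.fromRows 1 Zbar).PosDef) :
    (∀ Z : Matrix (Fin nb) (Fin na) ℝ,
        ((Matrix.fromRows (1 : Matrix (Fin na) (Fin na) ℝ) Z)ᵀ * N * Matrix.fromRows 1 Z).PosSemidef →
        ((Matrix.fromRows (1 : Matrix (Fin na) (Fin na) ℝ) Z)ᵀ * M * Matrix.fromRows 1 Z).PosSemidef) ↔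
      ∃ α : ℝ, 0 ≤ α ∧ (M - α • N).PosSemidef := by
  have hMt : Mᵀ = M := herm_transpose hM
  have hNt : Nᵀ = N := herm_transpose hN
  replace hslater : (((Matrix.fromRows (1 : Matrix (Fin na) (Fin na) ℝ) Zbar)ᵀ * N * Matrix.fromRows 1 Zbar : Matrix (Fin na) (Fin na) ℝ)).PosDef := hslater
  show (∀ Z : Matrix (Fin nb) (Fin na) ℝ,
      (((Matrix.fromRows (1 : Matrix (Fin na) (Fin na) ℝ) Z)ᵀ * N * Matrix.fromRows 1 Z : Matrix (Fin na) (Fin na) ℝ)).PosSemidef →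
      (((Matrix.fromRows (1 : Matrix (Fin na) (Fin na) ℝ) Z)ᵀ * M * Matrix.fromRows 1 Z : Matrix (Fin na) (Fin na) ℝ)).PosSemidef) ↔ _
  constructor
  · intro H
    -- pointwise condition
    have hpt : ∀ w : Fin na ⊕ Fin nb → ℝ, 0 ≤ qf N w → 0 ≤ qf M w :=
      fun w hw => stepC ha M N hMt hNt Zbar hslater H w hw
    -- Slater vector
    have he : ((Pi.single (⟨0, ha⟩ : Fin na) (1:ℝ) : Fin na → ℝ)) ≠ 0 := by
      intro hcon
      have := congrFun hcon (⟨0, ha⟩ : Fin na)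
      simp [Pi.single_eq_same] at this
    have hqu : 0 < qf N (Matrix.fromRows 1 Zbar *ᵥ (Pi.single (⟨0, ha⟩ : Fin na) (1:ℝ) : Fin na → ℝ)) := by
      have h2 := hslater.dotProduct_mulVec_pos he
      rw [star_trivial] at h2
      erw [qf_conj] at h2
      exact h2
    obtain ⟨α, hα, hall⟩ := slemma M N hpt _ hqu
    refine ⟨α, hα, ?_⟩
    rw [posSemidef_iff]
    constructor
    · rw [transpose_sub, transpose_smul, hMt, hNt]
    · intro ξ
      have h1 := hall ξ
      have h2 : ξ ⬝ᵥ (M - α • N) *ᵥ ξ = qf (M - α • N) ξ := rfl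
      rw [h2, qf_sub_smul]
      exact h1
  · rintro ⟨α, hα, hPSD⟩ Z hZN
    rw [posSemidef_iff]
    refine ⟨conj_transpose_symm hMt _, fun ξ => ?_⟩
    rw [qf_conj]
    have h1 : 0 ≤ qf (M - α • N) (Matrix.fromRows 1 Z *ᵥ ξ) := by
      have := hPSD.dotProduct_mulVec_nonneg (Matrix.fromRows 1 Z *ᵥ ξ)
      simpa [qf] using this
    have h2 : 0 ≤ qf N (Matrix.fromRows 1 Z *ᵥ ξ) := by
      have := hZN.dotProduct_mulVec_nonneg ξ
      rw [star_trivial] at this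
      rw [qf_conj] at this
      exact this
    rw [qf_sub_smul] at h1
    nlinarith [mul_nonneg hα h2]
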